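/- Let m ≥ 2 and n ≥ 2, and let A = A(−1) be the torus-braid monodromy matrix of size n over ZMod (2m) (so T = −1, corresponding to the dihedral quandle R_{2m}). Then the color period of A (the least positive integer p with A^p = I) is: p = 2n if n is odd, and p = m·n if n is even. -/

import Mathlib

/-- The torus-braid monodromy matrix `A(T)`: the `n × n` matrix (rows and
columns indexed by `Fin n`, i.e. `0,…,n−1` instead of `1,…,n`) with
`A_{i,i+1} = T` for `i < n−1`, last row `(1, 1−T, …, 1−T)`, and all other
entries `0`. -/
def torusMatrix (R : Type*) [CommRing R] (n : ℕ) (T : R) :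
    Matrix (Fin n) (Fin n) R :=
  Matrix.of fun i j =>
    if (i : ℕ) = n - 1 then (if (j : ℕ) = 0 then 1 else 1 - T)
    else if (j : ℕ) = (i : ℕ) + 1 then T else 0

open Fin.NatCast

section Aux

variable (R : Type*) [CommRing R]

/-- `Mm s a` : the matrix `s·I + a·v·𝟙ᵀ` with `v i = (-1)^(n-1-i)`. -/
def Mm (n : ℕ) (s a : R) : Matrix (Fin n) (Fin n) R :=
  Matrix.of fun i j => (if j = i then s else 0) + a * (-1 : R) ^ (n - 1 - (i : ℕ))

/-- closed form for the `k`-th power of the torus matrix at `T = -1`,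
valid for `k ≤ n`. -/
def Fm (n : ℕ) [NeZero n] (k : ℕ) : Matrix (Fin n) (Fin n) R :=
  Matrix.of fun i j => (if j = i + (k : Fin n) then (-1 : R) ^ k else 0)
    + (if n ≤ (i : ℕ) + k then 2 * (-1 : R) ^ (n - 1 - (i : ℕ)) else 0)

variable {R}

lemma sum_w (n : ℕ) :
    (∑ l : Fin n, (-1 : R) ^ (n - 1 - (l : ℕ))) = if Even n then 0 else 1 := by
  rw [Fin.sum_univ_eq_sum_range (fun t => (-1 : R) ^ (n - 1 - t)) n,
    Finset.sum_range_reflect (fun t => (-1 : R) ^ t) n, neg_one_geom_sum]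

lemma Mm_one (n : ℕ) : Mm R n 1 0 = 1 := by
  ext i j
  simp [Mm, Matrix.one_apply, eq_comm]

lemma Mm_mul (n : ℕ) (s a b : R) :
    Mm R n s a * Mm R n s b
      = Mm R n (s * s) (s * b + a * s + a * b * (if Even n then 0 else 1)) := by
  ext i j
  rw [Matrix.mul_apply]
  simp only [Mm, Matrix.of_apply]
  have expand : ∀ l : Fin n,
      ((if l = i then s else 0) + a * (-1 : R) ^ (n - 1 - (i : ℕ)))
        * ((if j = l then s else 0) + b * (-1 : R) ^ (n - 1 - (l : ℕ)))
      = (if l = i then (if j = i then s * s else 0) else 0)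
        + (if l = i then s * b * (-1 : R) ^ (n - 1 - (i : ℕ)) else 0)
        + (if l = j then a * (-1 : R) ^ (n - 1 - (i : ℕ)) * s else 0)
        + (a * b * (-1 : R) ^ (n - 1 - (i : ℕ))) * (-1 : R) ^ (n - 1 - (l : ℕ)) := by
    intro l
    rcases eq_or_ne l i with rfl | h
    · rcases eq_or_ne j l with rfl | h2
      · simp; ring
      · simp [h2, Ne.symm h2]; ring
    · rcases eq_or_ne j l with rfl | h2
      · simp [h, Ne.symm h]; ring
      · simp [h, h2, Ne.symm h2]; ring
  rw [Finset.sum_congr rfl fun l _ => expand l]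
  rw [Finset.sum_add_distrib, Finset.sum_add_distrib, Finset.sum_add_distrib,
    Finset.sum_ite_eq' Finset.univ i, Finset.sum_ite_eq' Finset.univ i,
    Finset.sum_ite_eq' Finset.univ j, ← Finset.mul_sum, sum_w]
  simp only [Finset.mem_univ, if_true]
  rcases eq_or_ne j i with h | h <;> simp [h] <;> split_ifs <;> ring

lemma Fm_zero (n : ℕ) [NeZero n] : Fm R n 0 = 1 := by
  ext i j
  have h1 : ¬ (n ≤ (i : ℕ) + 0) := by have := i.isLt; omega
  have h2 : ¬ (n ≤ (i : ℕ)) := by have := i.isLt; omega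
  simp [Fm, Matrix.one_apply, h1, h2, eq_comm]

lemma Fm_n (n : ℕ) [NeZero n] : Fm R n n = Mm R n ((-1) ^ n) 2 := by
  ext i j
  have h1 : ((n : Fin n)) = 0 := Fin.natCast_self n
  have h2 : n ≤ (i : ℕ) + n := Nat.le_add_left n _
  simp [Fm, Mm, h1, h2]

lemma Fm_colsum (n : ℕ) [NeZero n] (k : ℕ) (hk : k ≤ n) (j : Fin n) :
    (∑ l : Fin n, Fm R n k l j) = 1 := by
  simp only [Fm, Matrix.of_apply]
  rw [Finset.sum_add_distrib]
  have h1 : (∑ l : Fin n, (if j = l + (k : Fin n) then (-1 : R) ^ k else 0))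
      = (-1 : R) ^ k := by
    have : ∀ l : Fin n, (j = l + (k : Fin n)) ↔ (l = j - (k : Fin n)) := by
      intro l
      constructor
      · intro h; rw [h]; simp
      · intro h; rw [h]; simp
    rw [Finset.sum_congr rfl fun l _ => by rw [if_congr (this l) rfl rfl]]
    rw [Finset.sum_ite_eq' Finset.univ (j - (k : Fin n))]
    simp
  have h2 : (∑ l : Fin n, (if n ≤ (l : ℕ) + k then 2 * (-1 : R) ^ (n - 1 - (l : ℕ)) else 0))
      = 2 * (if Even k then 0 else 1) := by
    rw [Fin.sum_univ_eq_sum_range (fun t => if n ≤ t + k then 2 * (-1 : R) ^ (n - 1 - t) else 0) n]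
    rw [← Finset.sum_range_reflect]
    have step : ∀ t ∈ Finset.range n,
        (if n ≤ (n - 1 - t) + k then 2 * (-1 : R) ^ (n - 1 - (n - 1 - t)) else 0)
          = (if t < k then 2 * (-1 : R) ^ t else 0) := by
      intro t ht
      rw [Finset.mem_range] at ht
      have hc : (n ≤ (n - 1 - t) + k) ↔ (t < k) := by omega
      have he : n - 1 - (n - 1 - t) = t := by omega
      simp only [he, hc]
    rw [Finset.sum_congr rfl step]
    have : (∑ t ∈ Finset.range n, (if t < k then 2 * (-1 : R) ^ t else 0))
        = ∑ t ∈ Finset.range k, 2 * (-1 : R) ^ t := by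
      rw [← Finset.sum_subset (Finset.range_subset_range.2 hk)
        (fun x _ hx => by rw [Finset.mem_range, not_lt] at hx; rw [if_neg (by omega)])]
      exact Finset.sum_congr rfl fun x hx => by
        rw [Finset.mem_range] at hx; rw [if_pos hx]
    rw [this, ← Finset.mul_sum, neg_one_geom_sum]
  rw [h1, h2]
  rcases Nat.even_or_odd k with h | h
  · rw [Even.neg_one_pow h, if_pos h]; ring
  · rw [Odd.neg_one_pow h, if_neg (Nat.not_even_iff_odd.mpr h)]; ring

lemma torus_mul_Fm (n : ℕ) [NeZero n] (hn : 2 ≤ n) (k : ℕ) (hk : k < n) :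
    torusMatrix R n (-1) * Fm R n k = Fm R n (k + 1) := by
  ext i j
  rw [Matrix.mul_apply]
  by_cases hi : (i : ℕ) = n - 1
  · -- last row
    have hA : ∀ l : Fin n, torusMatrix R n (-1) i l
        = 2 - (if l = (0 : Fin n) then 1 else 0) := by
      intro l
      simp only [torusMatrix, Matrix.of_apply, hi, if_pos]
      rcases eq_or_ne l (0 : Fin n) with h | h
      · simp [h]; norm_num
      · have : (l : ℕ) ≠ 0 := fun hc => h (Fin.ext (by simpa using hc))
        simp [this, h]; ring
    rw [Finset.sum_congr rfl fun l _ => by rw [hA l]]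
    simp only [sub_mul]
    rw [Finset.sum_sub_distrib, ← Finset.mul_sum, Fm_colsum n k hk.le j, mul_one]
    have h0 : (∑ l : Fin n, (if l = (0 : Fin n) then 1 else 0) * Fm R n k l j)
        = Fm R n k 0 j := by
      rw [Finset.sum_congr rfl fun l _ => (by
        rcases eq_or_ne l (0 : Fin n) with h | h <;> simp [h] :
        (if l = (0 : Fin n) then (1 : R) else 0) * Fm R n k l j
          = if l = (0 : Fin n) then Fm R n k 0 j else 0)]
      rw [Finset.sum_ite_eq' Finset.univ (0 : Fin n)]
      simp
    rw [h0]
    -- compute both sides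
    have hc0 : ¬ (n ≤ ((0 : Fin n) : ℕ) + k) := by
      simp only [Fin.val_zero, zero_add]; omega
    have hival : i = ((n - 1 : ℕ) : Fin n) := by
      apply Fin.ext
      rw [Fin.val_natCast, Nat.mod_eq_of_lt (by omega)]
      exact hi
    have hidx : i + ((k + 1 : ℕ) : Fin n) = (k : Fin n) := by
      rw [hival, ← Nat.cast_add]
      have : n - 1 + (k + 1) = n + k := by omega
      rw [this, Nat.cast_add, Fin.natCast_self, zero_add]
    have hcond : n ≤ n - 1 + (k + 1) := by omega
    simp only [Fm, Matrix.of_apply, zero_add, hidx, if_neg hc0, hi, if_pos hcond, add_zero,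
      show n - 1 - (n - 1) = 0 by omega, pow_zero, mul_one]
    rcases eq_or_ne j ((k : ℕ) : Fin n) with h | h <;> simp [h, pow_succ] <;> ring
  · -- row i < n - 1
    have hilt : (i : ℕ) + 1 < n := by have := i.isLt; omega
    set i' : Fin n := ⟨(i : ℕ) + 1, hilt⟩ with hi'
    have hA : ∀ l : Fin n, torusMatrix R n (-1) i l * Fm R n k l j
        = (if l = i' then -(Fm R n k i' j) else 0) := by
      intro l
      simp only [torusMatrix, Matrix.of_apply, hi, if_neg, if_false]
      rcases eq_or_ne l i' with h | h
      · have : (l : ℕ) = (i : ℕ) + 1 := by rw [h]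
        simp [this, h, hi']
      · have : (l : ℕ) ≠ (i : ℕ) + 1 := fun hc => h (Fin.ext (by simpa using hc))
        simp [this, h]
    rw [Finset.sum_congr rfl fun l _ => hA l, Finset.sum_ite_eq' Finset.univ i']
    simp only [Finset.mem_univ, if_true]
    have hfin : i' = i + 1 := by
      apply Fin.ext
      rw [Fin.add_def]
      simp only [Fin.val_one', Nat.mod_eq_of_lt hn]
      rw [Nat.mod_eq_of_lt hilt]
    have hidx : i' + ((k : ℕ) : Fin n) = i + ((k + 1 : ℕ) : Fin n) := by
      rw [hfin, Nat.cast_add, Nat.cast_one, add_assoc, add_comm (1 : Fin n)]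
    have hcond : (n ≤ (i : ℕ) + 1 + k) ↔ (n ≤ (i : ℕ) + (k + 1)) := by omega
    have hexp : n - 1 - (i : ℕ) = (n - 1 - ((i : ℕ) + 1)) + 1 := by
      have := i.isLt; omega
    simp only [Fm, Matrix.of_apply, hi']
    rw [neg_add, hidx]
    simp only [hcond, hexp]
    congr 1
    · split_ifs <;> ring
    · split_ifs <;> ring

lemma torus_pow (n : ℕ) [NeZero n] (hn : 2 ≤ n) (k : ℕ) (hk : k ≤ n) :
    torusMatrix R n (-1) ^ k = Fm R n k := by
  induction k with
  | zero => rw [pow_zero, Fm_zero]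
  | succ k ih =>
    rw [pow_succ', ih (by omega), torus_mul_Fm n hn k (by omega)]

end Aux

/-- For `m, n ≥ 2`, the color period of the dihedral quandle `R_{2m}`
(the least positive `p` with `A(−1)^p = 1` over `ZMod (2m)`) is `2n` if `n`
is odd and `m·n` if `n` is even. -/
theorem colorPeriod_dihedral (m n : ℕ) (hm : 2 ≤ m) (hn : 2 ≤ n) :
    IsLeast {p : ℕ | 0 < p ∧ torusMatrix (ZMod (2 * m)) n (-1) ^ p = 1}
      (if Odd n then 2 * n else m * n) := by
  have : NeZero n := ⟨by omega⟩
  have hAn : torusMatrix (ZMod (2 * m)) n (-1) ^ n = Mm (ZMod (2 * m)) n ((-1) ^ n) 2 := by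
    rw [torus_pow n hn n le_rfl, Fm_n]
  -- the key divisibility: if A^p = 1 then n ∣ p, via reduction mod 2
  have hdvd : ∀ p : ℕ, torusMatrix (ZMod (2 * m)) n (-1) ^ p = 1 → n ∣ p := by
    intro p hp
    set φ : ZMod (2 * m) →+* ZMod 2 := ZMod.castHom ⟨m, rfl⟩ (ZMod 2) with hφ
    have h1 : (φ.mapMatrix (torusMatrix (ZMod (2 * m)) n (-1) ^ p)) = 1 := by rw [hp, map_one]
    rw [map_pow] at h1
    have hA' : φ.mapMatrix (torusMatrix (ZMod (2 * m)) n (-1))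
        = torusMatrix (ZMod 2) n (-1) := by
      ext i j
      simp only [RingHom.mapMatrix_apply, Matrix.map_apply, torusMatrix, Matrix.of_apply]
      rcases eq_or_ne ((i : ℕ)) (n - 1) with h | h <;>
        rcases eq_or_ne ((j : ℕ)) 0 with h2 | h2 <;>
        rcases eq_or_ne ((j : ℕ)) ((i : ℕ) + 1) with h3 | h3 <;>
        simp [h, h2, h3] <;> decide
    rw [hA'] at h1
    have hA2n : torusMatrix (ZMod 2) n (-1) ^ n = 1 := by
      rw [torus_pow n hn n le_rfl, Fm_n]
      have e1 : ((-1 : ZMod 2)) ^ n = 1 := by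
        rw [show (-1 : ZMod 2) = 1 by decide, one_pow]
      rw [e1, show (2 : ZMod 2) = 0 by decide, Mm_one]
    by_contra hnd
    have hr0 : p % n ≠ 0 := fun h => hnd (Nat.dvd_of_mod_eq_zero h)
    have hrlt : p % n < n := Nat.mod_lt _ (by omega)
    have hsplit : torusMatrix (ZMod 2) n (-1) ^ (p % n) = 1 := by
      have hmod := Nat.div_add_mod p n
      calc torusMatrix (ZMod 2) n (-1) ^ (p % n)
          = 1 * torusMatrix (ZMod 2) n (-1) ^ (p % n) := (one_mul _).symm
        _ = (torusMatrix (ZMod 2) n (-1) ^ n) ^ (p / n)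
            * torusMatrix (ZMod 2) n (-1) ^ (p % n) := by rw [hA2n, one_pow]
        _ = torusMatrix (ZMod 2) n (-1) ^ (n * (p / n) + p % n) := by
            rw [← pow_mul, ← pow_add]
        _ = torusMatrix (ZMod 2) n (-1) ^ p := by rw [hmod]
        _ = 1 := h1
    rw [torus_pow n hn (p % n) hrlt.le] at hsplit
    have h00 := congr_fun (congr_fun hsplit 0) 0
    have hc : ((0 : Fin n) ≠ (0 : Fin n) + ((p % n : ℕ) : Fin n)) := by
      rw [zero_add]
      intro hc
      have hval : (((p % n : ℕ) : Fin n) : ℕ) = 0 := by rw [← hc]; rfl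
      rw [Fin.val_natCast, Nat.mod_eq_of_lt hrlt] at hval
      exact hr0 hval
    have hc2 : ¬ (n ≤ ((0 : Fin n) : ℕ) + p % n) := by
      simp only [Fin.val_zero, zero_add]; omega
    rw [show ((1 : Matrix (Fin n) (Fin n) (ZMod 2)) 0 0) = 1 from Matrix.one_apply_eq 0] at h00
    simp only [Fm, Matrix.of_apply, if_neg hc, if_neg hc2, add_zero] at h00
    exact one_ne_zero h00.symm
  have h2ne : (2 : ZMod (2 * m)) ≠ 0 := by
    intro h
    have h2 : ((2 : ℕ) : ZMod (2 * m)) = 0 := by exact_mod_cast h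
    rw [ZMod.natCast_eq_zero_iff] at h2
    have := Nat.le_of_dvd (by omega) h2
    omega
  have h01 : ((0 : Fin n) : ℕ) ≠ ((1 : Fin n) : ℕ) := by
    simp [Fin.val_one', Nat.mod_eq_of_lt hn]
  have hone01 : (1 : Matrix (Fin n) (Fin n) (ZMod (2 * m))) 0 1 = 0 :=
    Matrix.one_apply_ne (fun h => h01 (congrArg Fin.val h))
  have h1ne0 : ((1 : Fin n) ≠ (0 : Fin n)) := fun h => h01 (congrArg Fin.val h).symm
  rcases Nat.even_or_odd n with hne | hno
  · -- n even
    rw [if_neg (Nat.not_odd_iff_even.mpr hne)]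
    have hs : ((-1 : ZMod (2 * m))) ^ n = 1 := Even.neg_one_pow hne
    have hB : torusMatrix (ZMod (2 * m)) n (-1) ^ n = Mm (ZMod (2 * m)) n 1 2 := by
      rw [hAn, hs]
    have hBpow : ∀ q : ℕ, (torusMatrix (ZMod (2 * m)) n (-1) ^ n) ^ q
        = Mm (ZMod (2 * m)) n 1 (2 * (q : ZMod (2 * m))) := by
      intro q
      induction q with
      | zero => rw [pow_zero, Nat.cast_zero, mul_zero, Mm_one]
      | succ q ih =>
        rw [pow_succ, ih, hB, Mm_mul, if_pos hne]
        push_cast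
        ring_nf
    have hw2 : ((-1 : ZMod (2 * m)) ^ (n - 1 - ((0 : Fin n) : ℕ))) *
        ((-1 : ZMod (2 * m)) ^ (n - 1 - ((0 : Fin n) : ℕ))) = 1 := by
      rw [← pow_add]
      exact Even.neg_one_pow ⟨_, rfl⟩
    constructor
    · refine ⟨by positivity, ?_⟩
      rw [show m * n = n * m by ring, pow_mul, hBpow m,
        show (2 * (m : ZMod (2 * m))) = ((2 * m : ℕ) : ZMod (2 * m)) by push_cast; ring,
        ZMod.natCast_self, Mm_one]
    · rintro p ⟨hp0, hp1⟩
      obtain ⟨q, rfl⟩ := hdvd p hp1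
      have hq0 : 0 < q := by
        rcases Nat.eq_zero_or_pos q with h | h
        · subst h; simp at hp0
        · exact h
      rw [pow_mul, hBpow q] at hp1
      have h01e := congr_fun (congr_fun hp1 0) 1
      simp only [Mm, Matrix.of_apply, if_neg h1ne0, hone01, zero_add] at h01e
      have hq2 : (2 * (q : ZMod (2 * m))) = 0 := by
        have h3 : 2 * (q : ZMod (2 * m)) * ((-1 : ZMod (2 * m)) ^ (n - 1 - ((0 : Fin n) : ℕ))
            * (-1 : ZMod (2 * m)) ^ (n - 1 - ((0 : Fin n) : ℕ))) = 0 := by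
          rw [← mul_assoc, h01e, zero_mul]
        rwa [hw2, mul_one] at h3
      have h4 : ((2 * q : ℕ) : ZMod (2 * m)) = 0 := by push_cast; linear_combination hq2
      rw [ZMod.natCast_eq_zero_iff] at h4
      have hmq : m ∣ q := (mul_dvd_mul_iff_left (a := 2) (by omega)).mp h4
      have hle : m ≤ q := Nat.le_of_dvd hq0 hmq
      calc m * n ≤ q * n := Nat.mul_le_mul_right n hle
        _ = n * q := Nat.mul_comm q n
  · -- n odd
    rw [if_pos hno]
    have hs : ((-1 : ZMod (2 * m))) ^ n = -1 := Odd.neg_one_pow hno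
    have hB : torusMatrix (ZMod (2 * m)) n (-1) ^ n = Mm (ZMod (2 * m)) n (-1) 2 := by
      rw [hAn, hs]
    have hB2 : (torusMatrix (ZMod (2 * m)) n (-1) ^ n) ^ 2 = 1 := by
      rw [sq, hB, Mm_mul, if_neg (Nat.not_even_iff_odd.mpr hno)]
      rw [show ((-1 : ZMod (2 * m)) * -1) = 1 by ring,
        show ((-1 : ZMod (2 * m)) * 2 + 2 * -1 + 2 * 2 * 1) = 0 by ring, Mm_one]
    constructor
    · refine ⟨by positivity, ?_⟩
      rw [show 2 * n = n * 2 by ring, pow_mul, hB2]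
    · rintro p ⟨hp0, hp1⟩
      obtain ⟨q, rfl⟩ := hdvd p hp1
      have hq0 : 0 < q := by
        rcases Nat.eq_zero_or_pos q with h | h
        · subst h; simp at hp0
        · exact h
      rw [pow_mul] at hp1
      have hqeven : Even q := by
        by_contra hqodd
        have hqodd : Odd q := Nat.not_even_iff_odd.mp hqodd
        obtain ⟨t, rfl⟩ := hqodd
        rw [pow_add, pow_mul, hB2, one_pow, one_mul, pow_one, hB] at hp1
        have h01e := congr_fun (congr_fun hp1 0) 1
        simp only [Mm, Matrix.of_apply, if_neg h1ne0, hone01, zero_add] at h01e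
        have hev : Even (n - 1 - ((0 : Fin n) : ℕ)) := by
          simp only [Fin.val_zero, Nat.sub_zero]
          obtain ⟨t', rfl⟩ := hno
          simpa using (even_two_mul t')
        rw [Even.neg_one_pow hev, mul_one] at h01e
        exact h2ne h01e
      obtain ⟨t, rfl⟩ := hqeven
      have ht1 : 1 ≤ t := by omega
      calc 2 * n ≤ 2 * n * t := by nlinarith
        _ = n * (t + t) := by ring
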